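/- Skew-symmetry of the double action: for every representation (U, ρ_U) of g, one has ϱ_{ϱ_U} + ϱ_{ϱ_U}(γ_{g,g} ⊙ 𝟙_U) = 0, where γ_{g,g} is the braiding intertwiner on g ⊗ g. -/

import Mathlib

noncomputable section

namespace LMI

/-- A graded vector space, modelled by a homogeneous basis with degree function. -/
structure GVS where
  B : Type
  deg : B → ℤ

/-- Tensor product of graded vector spaces (product of bases, sum of degrees). -/
def GVS.tens (U V : GVS) : GVS := ⟨U.B × V.B, fun p => U.deg p.1 + V.deg p.2⟩

variable (K : Type) [Field K]

/-- The sign (-1)^z. -/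
def ksign (z : ℤ) : K := (-1 : K) ^ z.natAbs

/-- The Koszul sign of a permutation acting on homogeneous elements of degrees `d`. -/
def kperm {n : ℕ} (d : Fin n → ℤ) (σ : Equiv.Perm (Fin n)) : K :=
  ∏ p ∈ Finset.univ.filter (fun p : Fin n × Fin n => p.1 < p.2 ∧ σ p.2 < σ p.1),
    ksign K (d p.1 * d p.2)

/-- The signature of a permutation, as an element of K. -/
def psign {n : ℕ} (σ : Equiv.Perm (Fin n)) : K := ((Equiv.Perm.sign σ : ℤ) : K)

/-- `(a, n-a)`-shuffles: permutations increasing on the first `a` and the last `n-a` positions. -/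
def IsShuffle {n : ℕ} (a : ℕ) (σ : Equiv.Perm (Fin n)) : Prop :=
  ∀ k l : Fin n, k < l → ((l : ℕ) < a ∨ a ≤ (k : ℕ)) → σ k < σ l

instance {n a : ℕ} : DecidablePred (IsShuffle (n := n) a) := fun σ => by
  unfold IsShuffle; infer_instance

def shuffles (n a : ℕ) : Finset (Equiv.Perm (Fin n)) :=
  Finset.univ.filter (IsShuffle a)

/-- Total degree of a family of basis elements. -/
def dsum (g : GVS) {m : ℕ} (ξ : Fin m → g.B) : ℤ := ∑ k, g.deg (ξ k)

def firstPart {β : Type} {n : ℕ} (a : Fin (n + 1)) (ξ : Fin n → β) : Fin (a : ℕ) → β :=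
  fun t => ξ ⟨t, by have h1 := t.isLt; have h2 := a.isLt; omega⟩

def lastPart {β : Type} {n : ℕ} (a : Fin (n + 1)) (ξ : Fin n → β) : Fin (n - (a : ℕ)) → β :=
  fun t => ξ ⟨(a : ℕ) + t, by have h1 := t.isLt; have h2 := a.isLt; omega⟩

/-- A "pre-intertwiner" `U ⇝ V`: a family of maps `g^{⊗n} ⊗ U → V`, given on bases. -/
abbrev Pre (g U V : GVS) : Type := (i : ℕ) → (Fin i → g.B) → U.B → (V.B →₀ K)

/-- A family of structure maps `ℓ^i : g^{⊗i} → g`, given on bases. -/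
abbrev LFam (g : GVS) : Type := (i : ℕ) → (Fin i → g.B) → (g.B →₀ K)

/-- Tensor product of two vectors, in basis coordinates. -/
def tensF {U V : GVS} (x : U.B →₀ K) (y : V.B →₀ K) : (U.tens V).B →₀ K :=
  x.sum fun b c => y.sum fun b' c' => Finsupp.single (b, b') (c * c')

/-- Linear extension of a map defined on a basis. -/
def lf {α β : Type} (φ : α → (β →₀ K)) (x : α →₀ K) : β →₀ K :=
  x.sum fun a c => c • φ a

/-- Juxtaposition (composition) of intertwiners:
`(G F)^i := Σ_{j̃+k=i} (-1)^{(|G|-j̃)k̃} G^j (1_{j̃} ⊗ F^k)(Σ_{j̃,k̃} ⊗ 1_U)`. -/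
def juxt {g U V W : GVS} (nG nF : ℤ) (G : Pre K g V W) (F : Pre K g U V) : Pre K g U W :=
  fun n ξ u =>
    ∑ a : Fin (n + 1), ∑ σ ∈ shuffles n (a : ℕ),
      (psign K σ * kperm K (g.deg ∘ ξ) σ
        * ksign K ((nF - ((n : ℤ) - ((a : ℕ) : ℤ))) * dsum g (firstPart a (ξ ∘ σ)))
        * ksign K ((nG - ((a : ℕ) : ℤ)) * ((n : ℤ) - ((a : ℕ) : ℤ))))
      • lf K (G (a : ℕ) (firstPart a (ξ ∘ σ))) (F (n - (a : ℕ)) (lastPart a (ξ ∘ σ)) u)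

/-- The odot (monoidal) product of intertwiners:
`(F ⊙ G)^i := Σ (-1)^{(|F|-j̃)k̃}(F^j ⊗ G^k)(1_{j̃} ⊗ s_{k̃,U} ⊗ 1_V)(Σ_{j̃,k̃} ⊗ 1_{U⊗V})`. -/
def odot {g U U' V V' : GVS} (nF nG : ℤ) (F : Pre K g U U') (G : Pre K g V V') :
    Pre K g (U.tens V) (U'.tens V') :=
  fun n ξ p =>
    ∑ a : Fin (n + 1), ∑ σ ∈ shuffles n (a : ℕ),
      (psign K σ * kperm K (g.deg ∘ ξ) σ
        * ksign K (U.deg p.1 * dsum g (lastPart a (ξ ∘ σ)))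
        * ksign K ((nG - ((n : ℤ) - ((a : ℕ) : ℤ))) * (dsum g (firstPart a (ξ ∘ σ)) + U.deg p.1))
        * ksign K ((nF - ((a : ℕ) : ℤ)) * ((n : ℤ) - ((a : ℕ) : ℤ))))
      • tensF K (F (a : ℕ) (firstPart a (ξ ∘ σ)) p.1) (G (n - (a : ℕ)) (lastPart a (ξ ∘ σ)) p.2)

/-- The identity intertwiner `𝟙_U`. -/
def oneI {g : GVS} (U : GVS) : Pre K g U U :=
  fun n _ u => if n = 0 then Finsupp.single u 1 else 0

/-- The homotopy components `ϱ_F^i := (-1)^i F^{i+1} : g^{⊗i} ⊗ U → V[|F|-i]`. -/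
def varr {g U V : GVS} (F : Pre K g U V) : Pre K g (g.tens U) V :=
  fun n ξ p => ksign K ((n : ℤ) + 1) • F (n + 1) (Fin.snoc ξ p.1) p.2

/-- The intertwiner `ℓ_U : U ⇝ (g ⊗ U)[2]` with components `ℓ^{ĩ} ⊗ 1_U`. -/
def ellU {g : GVS} (L : LFam K g) (U : GVS) : Pre K g U (g.tens U) :=
  fun n ξ u => (L n ξ).sum fun y c => Finsupp.single (y, u) c

/-- The braiding intertwiner `γ_{U,V}` with sole component the Koszul swap. -/
def gammaI {g : GVS} (U V : GVS) : Pre K g (U.tens V) (V.tens U) :=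
  fun n _ p => if n = 0 then ksign K (U.deg p.1 * V.deg p.2) • Finsupp.single (p.2, p.1) 1 else 0

/-- The adjoint representation `ρ_g^i = (-1)^{ĩ} ℓ^i`. -/
def adj {g : GVS} (L : LFam K g) : Pre K g g g :=
  fun n ξ x => ksign K (n : ℤ) • L (n + 1) (Fin.snoc ξ x)

/-- The action map `ϱ_U : g ⊙ U ⇝ U` with components `ϱ_U^i = (-1)^{ĩ} ρ_U^{i+1}`. -/
def actU {g U : GVS} (ρU : Pre K g U U) : Pre K g (g.tens U) U := - varr K ρU

/-- The hom-differential `[ρ,F] := ρ_V F - (-1)^{|F|} F ρ_U - ϱ_F ℓ_U`. -/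
def brkt {g U V : GVS} (L : LFam K g) (ρU : Pre K g U U) (ρV : Pre K g V V)
    (nf : ℤ) (F : Pre K g U V) : Pre K g U V :=
  juxt K 1 nf ρV F - ksign K nf • juxt K nf 1 F ρU
    - juxt K (nf - 1) 2 (varr K F) (ellU K L U)

/-- The tensor product structure map `ρ_{U,V} := ρ_U ⊙ 𝟙_V + 𝟙_U ⊙ ρ_V`. -/
def rhoT {g U V : GVS} (ρU : Pre K g U U) (ρV : Pre K g V V) :
    Pre K g (U.tens V) (U.tens V) :=
  odot K 1 0 ρU (oneI K V) + odot K 0 1 (oneI K U) ρV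

/-- `F` is an intertwiner `U ⇝ V[nf]`: graded of degree `nf` and fully
(Koszul-)skew-symmetric in the `g`-entries. -/
def IsIntertwiner (g U V : GVS) (nf : ℤ) (F : Pre K g U V) : Prop :=
  (∀ (n : ℕ) (ξ : Fin n → g.B) (u : U.B), ∀ b ∈ (F n ξ u).support,
      V.deg b = dsum g ξ + U.deg u + nf - n) ∧
  (∀ (n : ℕ) (ξ : Fin n → g.B) (u : U.B) (σ : Equiv.Perm (Fin n)),
      F n (ξ ∘ σ) u = (psign K σ * kperm K (g.deg ∘ ξ) σ) • F n ξ u)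

/-- The generalised Jacobi identity `Σ_{j̃+k=i} (-1)^{j̃} ℓ^j(ℓ^k ⊗ 1_{j̃})Σ_{k,j̃} = 0`. -/
def GJacobi (g : GVS) (L : LFam K g) : Prop :=
  ∀ (n : ℕ) (ξ : Fin n → g.B),
    (∑ a : Fin (n + 1), ∑ σ ∈ shuffles n (a : ℕ),
      (psign K σ * kperm K (g.deg ∘ ξ) σ * ksign K ((n : ℤ) - ((a : ℕ) : ℤ)))
      • ((L (a : ℕ) (firstPart a (ξ ∘ σ))).sum
          fun y c => c • L (n - (a : ℕ) + 1) (Fin.cons y (lastPart a (ξ ∘ σ))))) = 0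

/-- `(g, L)` is a homotopy Lie algebra: brackets `ℓ^i : Λ^i g → g[2-i]` (`i ≥ 1`)
satisfying the generalised Jacobi identity. -/
def IsHLA (g : GVS) (L : LFam K g) : Prop :=
  (L 0 = fun _ => 0) ∧
  (∀ (i : ℕ) (ξ : Fin i → g.B), ∀ b ∈ (L i ξ).support, g.deg b = dsum g ξ + 2 - i) ∧
  (∀ (i : ℕ) (ξ : Fin i → g.B) (σ : Equiv.Perm (Fin i)),
      L i (ξ ∘ σ) = (psign K σ * kperm K (g.deg ∘ ξ) σ) • L i ξ) ∧
  GJacobi K g L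

/-- `(U, ρU)` is a representation of `(g, L)`: a degree 1 intertwiner
with `ρ_U ρ_U = ϱ_{ρ_U} ℓ_U`. -/
def IsRep (g : GVS) (L : LFam K g) (U : GVS) (ρU : Pre K g U U) : Prop :=
  IsIntertwiner K g U U 1 ρU ∧
  juxt K 1 1 ρU ρU = juxt K 0 2 (varr K ρU) (ellU K L U)

/-- Transport an intertwiner along an identification of domain bases. -/
def transp {g U U' V : GVS} (e : U.B ≃ U'.B) (F : Pre K g U' V) : Pre K g U V :=
  fun n ξ u => F n ξ (e u)

/-- Transport an intertwiner along an identification of codomain bases. -/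
def transpC {g U V V' : GVS} (e : V.B ≃ V'.B) (F : Pre K g U V) : Pre K g U V' :=
  fun n ξ u => Finsupp.equivMapDomain e (F n ξ u)




section Aux

variable {g U V : GVS}

lemma tensF_zero_right (x : U.B →₀ K) : tensF K x (0 : V.B →₀ K) = 0 := by
  simp [tensF]

lemma tensF_zero_left (y : V.B →₀ K) : tensF K (0 : U.B →₀ K) y = 0 := by
  simp [tensF]

lemma tensF_single_single (b : U.B) (b' : V.B) (c c' : K) :
    tensF K (Finsupp.single b c) (Finsupp.single b' c') = Finsupp.single (b, b') (c * c') := by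
  classical
  unfold tensF
  rw [Finsupp.sum_single_index, Finsupp.sum_single_index]
  · rfl
  · simp only [mul_zero, zero_mul]; exact Finsupp.single_zero (M := K) _
  · simp only [mul_zero, zero_mul]
    rw [Finsupp.sum_single_index] <;> exact Finsupp.single_zero (M := K) _

lemma lf_zero {α β : Type} (φ : α → (β →₀ K)) : lf K φ 0 = 0 := by simp [lf]

lemma lf_single {α β : Type} (φ : α → (β →₀ K)) (a : α) (c : K) :
    lf K φ (Finsupp.single a c) = c • φ a := by
  unfold lf
  rw [Finsupp.sum_single_index]
  simp

lemma ksign_zero : ksign K 0 = 1 := by simp [ksign]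

lemma ksign_sq (z : ℤ) : ksign K z * ksign K z = 1 := by
  unfold ksign
  rw [← pow_add, ← two_mul, pow_mul]
  norm_num

lemma psign_one {n : ℕ} : psign K (1 : Equiv.Perm (Fin n)) = 1 := by simp [psign]

lemma kperm_one {n : ℕ} (d : Fin n → ℤ) : kperm K d 1 = 1 := by
  unfold kperm
  rw [Finset.filter_false_of_mem, Finset.prod_empty]
  rintro p _ ⟨h1, h2⟩
  simp only [Equiv.Perm.coe_one, id_eq] at h2
  exact absurd h2 (not_lt_of_gt h1)

lemma strictMono_perm_eq_one {n : ℕ} (σ : Equiv.Perm (Fin n)) (h : StrictMono σ) : σ = 1 := by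
  exact Equiv.ext fun i => congrFun h.eq_id i

lemma shuffles_self (n : ℕ) : shuffles n n = {1} := by
  ext σ
  simp only [shuffles, Finset.mem_filter, Finset.mem_univ, true_and, Finset.mem_singleton]
  constructor
  · intro h
    exact strictMono_perm_eq_one σ fun k l hkl => h k l hkl (Or.inl l.isLt)
  · rintro rfl k l hkl _
    simpa using hkl

lemma odot_gamma_one_ne {m : ℕ} (hm : m ≠ 0) (ξ : Fin m → g.B) (p : ((g.tens g).tens U).B) :
    odot K 0 0 (gammaI K g g) (oneI K U) m ξ p = 0 := by
  unfold odot
  refine Finset.sum_eq_zero fun a _ => Finset.sum_eq_zero fun σ _ => ?_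
  rcases Nat.eq_zero_or_pos (a : ℕ) with h | h
  · have h2 : m - (a : ℕ) ≠ 0 := by omega
    have : oneI K U (m - (a : ℕ)) (lastPart a (ξ ∘ σ)) p.2 = 0 := by simp [oneI, h2]
    rw [this, tensF_zero_right, smul_zero]
  · have : gammaI K g g (a : ℕ) (firstPart a (ξ ∘ σ)) p.1 = 0 := by
      simp [gammaI, Nat.pos_iff_ne_zero.mp h]
    rw [this, tensF_zero_left, smul_zero]

lemma odot_gamma_one_zero (ξ : Fin 0 → g.B) (x y : g.B) (u : U.B) :
    odot K 0 0 (gammaI K g g) (oneI K U) 0 ξ ((x, y), u)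
      = (Finsupp.single ((y, x), u) (ksign K (g.deg x * g.deg y))
          : ((g.tens g).tens U).B →₀ K) := by
  unfold odot
  rw [Fin.sum_univ_one]
  rw [show shuffles 0 ((0 : Fin 1) : ℕ) = {1} from shuffles_self 0, Finset.sum_singleton]
  have hd : dsum g (lastPart (0 : Fin 1) (ξ ∘ ⇑(1 : Equiv.Perm (Fin 0)))) = 0 := by
    simp [dsum]
  have hd2 : dsum g (firstPart (0 : Fin 1) (ξ ∘ ⇑(1 : Equiv.Perm (Fin 0)))) = 0 := by
    simp [dsum]
  rw [hd, hd2, psign_one, kperm_one]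
  have hz : ((0 : Fin 1) : ℕ) = 0 := rfl
  simp only [gammaI, oneI, hz, Nat.sub_self, Nat.cast_zero, ite_true, if_pos,
    Finsupp.smul_single, smul_eq_mul, mul_one, sub_zero, sub_self, zero_mul, mul_zero,
    zero_add, ksign_zero, one_mul]
  erw [Finsupp.smul_single, tensF_single_single, mul_one, one_smul]
  rw [smul_eq_mul, mul_one]
  rfl

lemma F_ne {m : ℕ} (hm : m ≠ 0) (ξ : Fin m → g.B) (p : (g.tens (g.tens U)).B) :
    transpC K (V := (g.tens g).tens U) (V' := g.tens (g.tens U)) (Equiv.prodAssoc g.B g.B U.B)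
      (transp K (U := g.tens (g.tens U)) (U' := (g.tens g).tens U)
        (Equiv.prodAssoc g.B g.B U.B).symm
        (odot K 0 0 (gammaI K g g) (oneI K U))) m ξ p = 0 := by
  unfold transpC transp
  rw [odot_gamma_one_ne K hm]
  exact Finsupp.equivMapDomain_zero

lemma F_zero {m : ℕ} (hm : m = 0) (ξ : Fin m → g.B) (x y : g.B) (u : U.B) :
    transpC K (V := (g.tens g).tens U) (V' := g.tens (g.tens U)) (Equiv.prodAssoc g.B g.B U.B)
      (transp K (U := g.tens (g.tens U)) (U' := (g.tens g).tens U)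
        (Equiv.prodAssoc g.B g.B U.B).symm
        (odot K 0 0 (gammaI K g g) (oneI K U))) m ξ (x, (y, u))
      = (Finsupp.single (y, (x, u)) (ksign K (g.deg x * g.deg y))
          : (g.tens (g.tens U)).B →₀ K) := by
  subst hm
  unfold transpC transp
  change Finsupp.equivMapDomain (Equiv.prodAssoc g.B g.B U.B)
      (odot K 0 0 (gammaI K g g) (oneI K U) 0 ξ ((x, y), u)) = _
  rw [odot_gamma_one_zero]
  erw [Finsupp.equivMapDomain_single]
  rfl

lemma ksign_succ_mul (n : ℕ) : ksign K ((n : ℤ) + 1) * ksign K ((n : ℤ) + 2) = -1 := by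
  unfold ksign
  have h1 : ((n : ℤ) + 1).natAbs = n + 1 := by omega
  have h2 : ((n : ℤ) + 2).natAbs = n + 2 := by omega
  rw [h1, h2, ← pow_add]
  have : n + 1 + (n + 2) = 2 * (n + 1) + 1 := by omega
  rw [this, pow_succ, pow_mul]
  norm_num

lemma varr_actU_eval (ρU : Pre K g U U) (n : ℕ) (ξ : Fin n → g.B) (a b : g.B) (u : U.B) :
    varr K (actU K ρU) n ξ (a, (b, u))
      = ρU (n + 2) (Fin.snoc (Fin.snoc ξ a) b) u := by
  unfold varr actU
  show ksign K ((n : ℤ) + 1) • (-(varr K ρU)) (n + 1) (Fin.snoc ξ a) (b, u) = _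
  show ksign K ((n : ℤ) + 1) • -(varr K ρU (n + 1) (Fin.snoc ξ a) (b, u)) = _
  unfold varr
  rw [show (((n + 1 : ℕ) : ℤ) + 1) = (n : ℤ) + 2 by push_cast; ring]
  rw [smul_neg, smul_smul, ksign_succ_mul]
  simp

end Aux

section Aux2

variable {g U : GVS}

lemma snoc_comp_swap {n : ℕ} (ξ : Fin n → g.B) (x y : g.B) :
    (Fin.snoc (Fin.snoc ξ x) y : Fin (n + 2) → g.B)
        ∘ ⇑(Equiv.swap (Fin.castSucc (Fin.last n)) (Fin.last (n + 1)))
      = Fin.snoc (Fin.snoc ξ y) x := by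
  funext i
  refine Fin.lastCases ?_ (fun j => ?_) i
  · simp [Function.comp, Equiv.swap_apply_right]
  · refine Fin.lastCases ?_ (fun k => ?_) j
    · simp [Function.comp, Equiv.swap_apply_left]
    · have h1 : Fin.castSucc (Fin.castSucc k) ≠ Fin.castSucc (Fin.last n) := by
        intro h
        have := congrArg Fin.val h
        simp only [Fin.coe_castSucc, Fin.val_last] at this
        exact absurd this (Nat.ne_of_lt k.isLt)
      have h2 : Fin.castSucc (Fin.castSucc k) ≠ Fin.last (n + 1) := by
        intro h
        have := congrArg Fin.val h
        simp only [Fin.coe_castSucc, Fin.val_last] at this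
        omega
      simp [Function.comp, Equiv.swap_apply_of_ne_of_ne h1 h2]

lemma filter_swap_last (n : ℕ) :
    Finset.univ.filter (fun p : Fin (n + 2) × Fin (n + 2) =>
        p.1 < p.2 ∧ (Equiv.swap (Fin.castSucc (Fin.last n)) (Fin.last (n + 1))) p.2
          < (Equiv.swap (Fin.castSucc (Fin.last n)) (Fin.last (n + 1))) p.1)
      = {(Fin.castSucc (Fin.last n), Fin.last (n + 1))} := by
  ext p
  obtain ⟨p1, p2⟩ := p
  simp only [Finset.mem_filter, Finset.mem_univ, true_and, Finset.mem_singleton, Prod.mk.injEq]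
  constructor
  · rintro ⟨h1, h2⟩
    rw [Equiv.swap_apply_def, Equiv.swap_apply_def] at h2
    have e1 := p1.isLt
    have e2 := p2.isLt
    split_ifs at h2 <;>
      (simp only [Fin.lt_def, Fin.ext_iff, Fin.coe_castSucc, Fin.val_last] at * <;> omega)
  · rintro ⟨rfl, rfl⟩
    refine ⟨by simp [Fin.lt_def], ?_⟩
    rw [Equiv.swap_apply_left, Equiv.swap_apply_right]
    simp [Fin.lt_def]

lemma kperm_swap_last (n : ℕ) (d : Fin (n + 2) → ℤ) :
    kperm K d (Equiv.swap (Fin.castSucc (Fin.last n)) (Fin.last (n + 1)))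
      = ksign K (d (Fin.castSucc (Fin.last n)) * d (Fin.last (n + 1))) := by
  unfold kperm
  rw [filter_swap_last, Finset.prod_singleton]

end Aux2


/-- skew-symmetry of the double action: for every representation
`(U,ρ_U)` of `g`, one has `ϱ_{ϱ_U} + ϱ_{ϱ_U}(γ_{g,g} ⊙ 𝟙_U) = 0` (along the
canonical associators of tensor products). -/
theorem double_act_skew [CharZero K] {g U : GVS} (L : LFam K g)
    (hg : IsHLA K g L)
    (ρU : Pre K g U U) (hU : IsRep K g L U ρU) :
    varr K (actU K ρU)
      + juxt K (-1) 0 (varr K (actU K ρU))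
          (transpC K (Equiv.prodAssoc g.B g.B U.B)
            (transp K (Equiv.prodAssoc g.B g.B U.B).symm
              (odot K 0 0 (gammaI K g g) (oneI K U)))) = 0 := by
  funext n ξ p
  obtain ⟨x, y, u⟩ := p
  simp only [Pi.add_apply, Pi.zero_apply]
  have hj : juxt K (-1) 0 (varr K (actU K ρU))
      (transpC K (V := (g.tens g).tens U) (V' := g.tens (g.tens U))
          (Equiv.prodAssoc g.B g.B U.B)
        (transp K (U := g.tens (g.tens U)) (U' := (g.tens g).tens U)
          (Equiv.prodAssoc g.B g.B U.B).symm
          (odot K 0 0 (gammaI K g g) (oneI K U)))) n ξ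
        ((x, (y, u)) : (g.tens (g.tens U)).B)
      = ksign K (g.deg x * g.deg y) • varr K (actU K ρU) n ξ
        ((y, (x, u)) : (g.tens (g.tens U)).B) := by
    unfold juxt
    rw [Finset.sum_eq_single (Fin.last n)]
    · rw [show shuffles n ((Fin.last n : ℕ)) = {1} from shuffles_self n, Finset.sum_singleton]
      rw [F_zero K (m := n - ((Fin.last n : ℕ))) (show n - ((Fin.last n : ℕ)) = 0 from Nat.sub_self n) (lastPart (Fin.last n) (ξ ∘ ⇑(1 : Equiv.Perm (Fin n)))) x y u]
      erw [lf_single, psign_one, kperm_one]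
      have hfp : firstPart (Fin.last n) (ξ ∘ ⇑(1 : Equiv.Perm (Fin n))) = ξ := by
        funext t; simp [firstPart]
      rw [hfp]
      rw [show (((Fin.last n : ℕ)) : ℤ) = (n : ℤ) from rfl]
      have e1 : ((0 : ℤ) - ((n : ℤ) - (n : ℤ))) * dsum g ξ = 0 := by ring
      have e2 : ((-1 : ℤ) - (n : ℤ)) * ((n : ℤ) - (n : ℤ)) = 0 := by ring
      rw [e1, e2, ksign_zero]
      simp
    · intro b _ hb
      refine Finset.sum_eq_zero fun σ _ => ?_
      have hb' : n - (b : ℕ) ≠ 0 := by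
        have h1 := b.isLt
        have h2 : (b : ℕ) ≠ n := fun h => hb (Fin.ext (by simpa using h))
        omega
      erw [F_ne K hb', lf_zero, smul_zero]
    · intro h; exact absurd (Finset.mem_univ _) h
  erw [Pi.add_apply, hj, varr_actU_eval, varr_actU_eval]
  have hne : Fin.castSucc (Fin.last n) ≠ Fin.last (n + 1) := by
    intro h
    have := congrArg Fin.val h
    simp only [Fin.coe_castSucc, Fin.val_last] at this
    omega
  have hskew := hU.1.2 (n + 2) (Fin.snoc (Fin.snoc ξ x) y) u
      (Equiv.swap (Fin.castSucc (Fin.last n)) (Fin.last (n + 1)))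
  rw [snoc_comp_swap] at hskew
  have hps : psign K (Equiv.swap (Fin.castSucc (Fin.last n)) (Fin.last (n + 1))) = -1 := by
    simp [psign, Equiv.Perm.sign_swap hne]
  rw [hps, kperm_swap_last] at hskew
  have h1 : (g.deg ∘ (Fin.snoc (Fin.snoc ξ x) y : Fin (n + 2) → g.B)) (Fin.castSucc (Fin.last n))
      = g.deg x := by simp
  have h2 : (g.deg ∘ (Fin.snoc (Fin.snoc ξ x) y : Fin (n + 2) → g.B)) (Fin.last (n + 1))
      = g.deg y := by simp
  rw [h1, h2] at hskew
  rw [hskew, smul_smul]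
  have h3 : ksign K (g.deg x * g.deg y) * (-1 * ksign K (g.deg x * g.deg y))
      = -(ksign K (g.deg x * g.deg y) * ksign K (g.deg x * g.deg y)) := by ring
  rw [h3, ksign_sq, neg_smul, one_smul, add_neg_cancel]
  rfl


end LMI
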